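/- Let $0<p<1$, $\mu>0$, $\sigma>0$, $\beta>0$, $l>0$, and $0\le k<r$. Suppose $v:(0,\infty)\to\mathbb{R}$ is three times continuously differentiable, convex, satisfies $v'(y)<-\frac{l}{r-k}$ for all $y>0$, and solves the dual ODE $\beta\big(v(y)-y\,v'(y)\big)-\frac{\mu^2}{2\sigma^2}y^2 v''(y)-G\big(-k\,v'(y)+l,\;y\big)+r\,y\,v'(y)=0$ for all $y>0$. Then $v''(y)>0$ for all $y>0$. -/

import Mathlib

open Real Set

/-- `G p u y = sup_{c ≥ u} (c^p/p - c y)`. -/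
noncomputable def G (p u y : ℝ) : ℝ :=
  sSup ((fun c : ℝ => c ^ p / p - c * y) '' {c : ℝ | u ≤ c})

/-- Concavity/tangent-line inequality for `rpow` with exponent in `(0,1)`. -/
lemma rpow_tangent {p c d : ℝ} (hp0 : 0 < p) (hp1 : p < 1) (hc : 0 < c) (hd : 0 < d) :
    c ^ p ≤ d ^ p + p * d ^ (p - 1) * (c - d) := by
  have hs : (-1 : ℝ) ≤ c / d - 1 := by
    have : 0 < c / d := div_pos hc hd
    linarith
  have hB := rpow_one_add_le_one_add_mul_self hs hp0.le hp1.le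
  rw [add_sub_cancel] at hB
  have hdp : (0:ℝ) < d ^ p := Real.rpow_pos_of_pos hd p
  have h1 : (c / d) ^ p * d ^ p = c ^ p := by
    rw [← Real.mul_rpow (by positivity) hd.le, div_mul_cancel₀ _ hd.ne']
  have h2 : d ^ p / d = d ^ (p - 1) := by
    rw [Real.rpow_sub hd, Real.rpow_one]
  calc c ^ p = (c / d) ^ p * d ^ p := h1.symm
    _ ≤ (1 + p * (c / d - 1)) * d ^ p := by
        apply mul_le_mul_of_nonneg_right hB hdp.le
    _ = d ^ p + p * (d ^ p / d) * (c - d) := by field_simp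
    _ = d ^ p + p * d ^ (p - 1) * (c - d) := by rw [h2]

lemma chat_pow {p y : ℝ} (hp1 : p < 1) (hy : 0 < y) :
    (y ^ (1/(p-1))) ^ (p-1) = y := by
  rw [← Real.rpow_mul hy.le, one_div_mul_cancel (by linarith : p - 1 ≠ 0), Real.rpow_one]

lemma chat_pow_p {p y : ℝ} (hy : 0 < y) :
    (y ^ (1/(p-1))) ^ p = y ^ (p/(p-1)) := by
  rw [← Real.rpow_mul hy.le, one_div, inv_mul_eq_div]

lemma chat_mul {p y : ℝ} (hp1 : p < 1) (hy : 0 < y) :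
    y ^ (1/(p-1)) * y = y ^ (p/(p-1)) := by
  calc y ^ (1/(p-1)) * y = y ^ (1/(p-1)) * y ^ (1:ℝ) := by rw [Real.rpow_one]
    _ = y ^ (1/(p-1) + 1) := (Real.rpow_add hy _ _).symm
    _ = y ^ (p/(p-1)) := by
        have h1 : p - 1 ≠ 0 := by linarith
        congr 1
        field_simp
        ring

lemma chat_val {p y : ℝ} (hp0 : 0 < p) (hp1 : p < 1) (hy : 0 < y) :
    (y ^ (1/(p-1))) ^ p / p - y ^ (1/(p-1)) * y = (1-p)/p * y ^ (p/(p-1)) := by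
  rw [chat_pow_p hy, chat_mul hp1 hy]
  field_simp

lemma f_le_interior {p y c : ℝ} (hp0 : 0 < p) (hp1 : p < 1) (hy : 0 < y) (hc : 0 < c) :
    c ^ p / p - c * y ≤ (1-p)/p * y ^ (p/(p-1)) := by
  set d := y ^ (1/(p-1)) with hdd
  have hd : 0 < d := Real.rpow_pos_of_pos hy _
  have ht := rpow_tangent hp0 hp1 hc hd
  rw [chat_pow hp1 hy] at ht
  have hA : c ^ p / p ≤ (d ^ p + p * y * (c - d))/p := by
    gcongr
  have hB : (d ^ p + p * y * (c - d))/p = d ^ p / p + y * (c - d) := by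
    field_simp
  rw [← chat_val hp0 hp1 hy, ← hdd]
  nlinarith [hA, hB]

lemma f_le_boundary {p u y c : ℝ} (hp0 : 0 < p) (hp1 : p < 1) (hy : 0 < y)
    (hu : 0 < u) (hb : y ^ (1/(p-1)) ≤ u) (hc : u ≤ c) :
    c ^ p / p - c * y ≤ u ^ p / p - u * y := by
  have hc0 : 0 < c := hu.trans_le hc
  have ht := rpow_tangent hp0 hp1 hc0 hu
  have hup : u ^ (p-1) ≤ y := by
    have := Real.rpow_le_rpow_of_nonpos
      (Real.rpow_pos_of_pos hy (1/(p-1))) hb (by linarith : p - 1 ≤ 0)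
    rwa [chat_pow hp1 hy] at this
  have hA : c ^ p / p ≤ (u ^ p + p * u ^ (p-1) * (c - u))/p := by
    gcongr
  have hB : (u ^ p + p * u ^ (p-1) * (c - u))/p = u ^ p / p + u ^ (p-1) * (c - u) := by
    field_simp
  nlinarith [mul_nonneg (sub_nonneg.2 hc) (sub_nonneg.2 hup)]

lemma G_bddAbove {p u y : ℝ} (hp0 : 0 < p) (hp1 : p < 1) (hy : 0 < y) (hu : 0 < u) :
    BddAbove ((fun c : ℝ => c ^ p / p - c * y) '' {c : ℝ | u ≤ c}) := by
  refine ⟨(1-p)/p * y ^ (p/(p-1)), ?_⟩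
  rintro _ ⟨c, hc, rfl⟩
  exact f_le_interior hp0 hp1 hy (hu.trans_le hc)

lemma G_ge_self {p u y : ℝ} (hp0 : 0 < p) (hp1 : p < 1) (hy : 0 < y) (hu : 0 < u) :
    u ^ p / p - u * y ≤ G p u y :=
  le_csSup (G_bddAbove hp0 hp1 hy hu) ⟨u, le_refl u, rfl⟩

lemma G_eq_interior {p u y : ℝ} (hp0 : 0 < p) (hp1 : p < 1) (hy : 0 < y) (hu : 0 < u)
    (hb : u ≤ y ^ (1/(p-1))) :
    G p u y = (1-p)/p * y ^ (p/(p-1)) := by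
  apply le_antisymm
  · refine csSup_le ⟨_, ⟨u, le_refl u, rfl⟩⟩ ?_
    rintro _ ⟨c, hc, rfl⟩
    exact f_le_interior hp0 hp1 hy (hu.trans_le hc)
  · rw [← chat_val hp0 hp1 hy]
    exact le_csSup (G_bddAbove hp0 hp1 hy hu) ⟨y ^ (1/(p-1)), hb, rfl⟩

lemma G_eq_boundary {p u y : ℝ} (hp0 : 0 < p) (hp1 : p < 1) (hy : 0 < y) (hu : 0 < u)
    (hb : y ^ (1/(p-1)) ≤ u) :
    G p u y = u ^ p / p - u * y := by
  apply le_antisymm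
  · refine csSup_le ⟨_, ⟨u, le_refl u, rfl⟩⟩ ?_
    rintro _ ⟨c, hc, rfl⟩
    exact f_le_boundary hp0 hp1 hy hu hb hc
  · exact G_ge_self hp0 hp1 hy hu

/-- A function monotone on `Ioi 0` has nonnegative derivative at interior points. -/
lemma deriv_nonneg_of_monotoneOn {f : ℝ → ℝ} {x d : ℝ} (hx : 0 < x)
    (hm : MonotoneOn f (Ioi 0)) (hf : HasDerivAt f d x) : 0 ≤ d := by
  have h := hasDerivAt_iff_tendsto_slope.1 hf
  have h' : Filter.Tendsto (slope f x) (nhdsWithin x (Ioi x)) (nhds d) :=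
    h.mono_left (nhdsWithin_mono _ fun z hz => ne_of_gt hz)
  refine ge_of_tendsto h' ?_
  filter_upwards [self_mem_nhdsWithin] with z hz
  rw [slope_def_field]
  have hz' : x < z := hz
  have : f x ≤ f z := hm hx (lt_trans hx hz') hz'.le
  apply div_nonneg (by linarith) (by linarith)

/-- a convex `C³` solution `v` of the dual ODE with `v'(y) < -l/(r-k)`
satisfies `v''(y) > 0` for all `y > 0`. -/
theorem stmt_7 (p μ σ β r k l : ℝ) (hp0 : 0 < p) (hp1 : p < 1) (hμ : 0 < μ) (hσ : 0 < σ)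
    (hβ : 0 < β) (hl : 0 < l) (hk : 0 ≤ k) (hkr : k < r)
    (v : ℝ → ℝ) (hv : ContDiffOn ℝ 3 v (Ioi 0))
    (hconv : ConvexOn ℝ (Ioi 0) v)
    (hv' : ∀ y ∈ Ioi (0 : ℝ), deriv v y < -(l / (r - k)))
    (hODE : ∀ y ∈ Ioi (0 : ℝ),
      β * (v y - y * deriv v y) - μ ^ 2 / (2 * σ ^ 2) * y ^ 2 * deriv (deriv v) y
        - G p (-k * deriv v y + l) y + r * y * deriv v y = 0) :
    ∀ y ∈ Ioi (0 : ℝ), 0 < deriv (deriv v) y := by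
  have hrk : 0 < r - k := by linarith
  have hopen : IsOpen (Ioi (0:ℝ)) := isOpen_Ioi
  have hA : 0 < μ ^ 2 / (2 * σ ^ 2) := by positivity
  set A := μ ^ 2 / (2 * σ ^ 2) with hAdef
  -- differentiability facts
  have hv1 : ContDiffOn ℝ 2 (deriv v) (Ioi 0) := hv.deriv_of_isOpen hopen (by norm_num)
  have hv2 : ContDiffOn ℝ 1 (deriv (deriv v)) (Ioi 0) := hv1.deriv_of_isOpen hopen (by norm_num)
  have hdv : ∀ x ∈ Ioi (0:ℝ), HasDerivAt v (deriv v x) x := fun x hx =>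
    ((hv.contDiffAt (hopen.mem_nhds hx)).differentiableAt (by norm_num)).hasDerivAt
  have hdv1 : ∀ x ∈ Ioi (0:ℝ), HasDerivAt (deriv v) (deriv (deriv v) x) x := fun x hx =>
    ((hv1.contDiffAt (hopen.mem_nhds hx)).differentiableAt (by norm_num)).hasDerivAt
  have hdv2 : ∀ x ∈ Ioi (0:ℝ), HasDerivAt (deriv (deriv v)) (deriv (deriv (deriv v)) x) x :=
    fun x hx =>
    ((hv2.contDiffAt (hopen.mem_nhds hx)).differentiableAt (by norm_num)).hasDerivAt
  -- the dual variable is positive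
  have hv1neg : ∀ x ∈ Ioi (0:ℝ), deriv v x < 0 := by
    intro x hx
    have h1 := hv' x hx
    have h2 : 0 < l / (r - k) := div_pos hl hrk
    linarith
  have hu_pos : ∀ x ∈ Ioi (0:ℝ), 0 < -k * deriv v x + l := by
    intro x hx
    have h2 := hv1neg x hx
    nlinarith [mul_nonneg hk (neg_nonneg.2 h2.le)]
  -- rearranged ODE
  have hF : ∀ x ∈ Ioi (0:ℝ),
      β * v x + (r - β) * (x * deriv v x) - G p (-k * deriv v x + l) x
        = A * x ^ 2 * deriv (deriv v) x := by
    intro x hx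
    have := hODE x hx
    ring_nf at this ⊢
    linarith
  -- second derivative nonnegative by convexity
  have hv2nonneg : ∀ x ∈ Ioi (0:ℝ), 0 ≤ deriv (deriv v) x := by
    have hmono : MonotoneOn (deriv v) (Ioi 0) :=
      hconv.monotoneOn_deriv fun x hx => (hdv x hx).differentiableAt
    intro x hx
    exact deriv_nonneg_of_monotoneOn hx hmono (hdv1 x hx)
  intro y₀ hy₀
  by_contra hcon
  push_neg at hcon
  have hy₀' : (0:ℝ) < y₀ := hy₀
  have h20 : deriv (deriv v) y₀ = 0 := le_antisymm hcon (hv2nonneg y₀ hy₀)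
  rcases le_or_gt (y₀ ^ (1/(p-1))) (-k * deriv v y₀ + l) with hcase | hcase
  · -- Case A: boundary case, the sup is attained at u(y₀)
    set W : ℝ → ℝ := fun x =>
      β * v x + (r - β) * (x * deriv v x)
        - ((-k * deriv v x + l) ^ p / p - (-k * deriv v x + l) * x) with hWdef
    have hWF : ∀ x ∈ Ioi (0:ℝ), A * x ^ 2 * deriv (deriv v) x ≤ W x := by
      intro x hx
      have h1 := hF x hx
      have h2 := G_ge_self (u := -k * deriv v x + l) hp0 hp1 hx (hu_pos x hx)
      simp only [hWdef]
      linarith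
    have hW0 : W y₀ = 0 := by
      have h1 := hF y₀ hy₀
      rw [G_eq_boundary hp0 hp1 hy₀' (hu_pos y₀ hy₀) hcase, h20] at h1
      simp only [hWdef]
      linarith [h1]
    have hmin : IsLocalMin W y₀ := by
      filter_upwards [hopen.mem_nhds hy₀] with x hx
      have := (hWF x hx)
      have h3 : 0 ≤ A * x ^ 2 * deriv (deriv v) x := by
        have hxx : (0:ℝ) < x := hx
        have := hv2nonneg x hx
        positivity
      rw [hW0]
      linarith
    have hd0 : deriv W y₀ = 0 := hmin.deriv_eq_zero
    -- compute the derivative of W at y₀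
    have h1 := hdv y₀ hy₀
    have h2 : HasDerivAt (deriv v) 0 y₀ := h20 ▸ hdv1 y₀ hy₀
    have hu : HasDerivAt (fun x => -k * deriv v x + l) 0 y₀ := by
      simpa using (h2.const_mul (-k)).add_const l
    have hup : HasDerivAt (fun x => (-k * deriv v x + l) ^ p) 0 y₀ := by
      have := hu.rpow_const (p := p) (Or.inl (ne_of_gt (hu_pos y₀ hy₀)))
      simpa using this
    have hupp : HasDerivAt (fun x => (-k * deriv v x + l) ^ p / p) 0 y₀ := by
      simpa using hup.div_const p
    have hux : HasDerivAt (fun x => (-k * deriv v x + l) * x)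
        (0 * y₀ + (-k * deriv v y₀ + l) * 1) y₀ := hu.mul (hasDerivAt_id y₀)
    have hxv : HasDerivAt (fun x => x * deriv v x) (1 * deriv v y₀ + y₀ * 0) y₀ :=
      (hasDerivAt_id y₀).mul h2
    have hWd : HasDerivAt W ((r - k) * deriv v y₀ + l) y₀ := by
      have := ((h1.const_mul β).add (hxv.const_mul (r - β))).sub (hupp.sub hux)
      refine this.congr_deriv ?_
      ring
    have hneg : (r - k) * deriv v y₀ + l < 0 := by
      have h3 := hv' y₀ hy₀
      have h4 : (r - k) * deriv v y₀ < (r - k) * (-(l / (r - k))) :=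
        mul_lt_mul_of_pos_left h3 hrk
      have h5 : (r - k) * (-(l / (r - k))) = -l := by
        field_simp
      linarith
    rw [hWd.deriv] at hd0
    linarith
  · -- Case B: interior case
    set q : ℝ := p / (p - 1) with hqdef
    have hq_neg : q < 0 := div_neg_of_pos_of_neg hp0 (by linarith)
    set F : ℝ → ℝ := fun x =>
      β * v x + (r - β) * (x * deriv v x) - (1 - p) / p * x ^ q with hFdef
    set g : ℝ → ℝ := fun x =>
      β * deriv v x + (r - β) * (deriv v x + x * deriv (deriv v) x)
        - (1 - p) / p * (q * x ^ (q - 1)) with hgdef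
    have hFd : ∀ x ∈ Ioi (0:ℝ), HasDerivAt F (g x) x := by
      intro x hx
      have hxx : (0:ℝ) < x := hx
      have h1 := hdv x hx
      have h2 := hdv1 x hx
      have hxp : HasDerivAt (fun t : ℝ => t ^ q) (q * x ^ (q - 1)) x :=
        Real.hasDerivAt_rpow_const (Or.inl hxx.ne')
      have := ((h1.const_mul β).add (((hasDerivAt_id x).mul h2).const_mul (r - β))).sub
        (hxp.const_mul ((1 - p) / p))
      simp only [id_eq] at this
      refine this.congr_deriv ?_
      ring
    -- the interior formula for G holds in a neighbourhood of y₀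
    have hvcont : ContinuousAt (deriv v) y₀ :=
      (hv1.continuousOn.continuousAt (hopen.mem_nhds hy₀))
    have hccont : ContinuousAt (fun x : ℝ => x ^ (1/(p-1))) y₀ :=
      Real.continuousAt_rpow_const y₀ _ (Or.inl hy₀'.ne')
    have hucont : ContinuousAt (fun x => -k * deriv v x + l) y₀ :=
      (hvcont.const_mul (-k)).add continuousAt_const
    have hev : ∀ᶠ x in nhds y₀, x ∈ Ioi (0:ℝ) ∧ -k * deriv v x + l < x ^ (1/(p-1)) := by
      have e1 : ∀ᶠ x in nhds y₀, (0:ℝ) < x := eventually_gt_nhds hy₀'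
      have e2 : ∀ᶠ x in nhds y₀, -k * deriv v x + l < x ^ (1/(p-1)) :=
        hucont.eventually_lt hccont hcase
      filter_upwards [e1, e2] with x h1 h2
      exact ⟨h1, h2⟩
    have hFeq : ∀ᶠ x in nhds y₀, F x = A * x ^ 2 * deriv (deriv v) x := by
      filter_upwards [hev] with x ⟨hx, hlt⟩
      have h1 := hF x hx
      rw [G_eq_interior hp0 hp1 hx (hu_pos x hx) hlt.le] at h1
      simp only [hFdef, hqdef]
      linarith
    have hFnonneg : ∀ᶠ x in nhds y₀, 0 ≤ F x := by
      filter_upwards [hFeq, hev] with x h1 ⟨hx, _⟩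
      rw [h1]
      have hxx : (0:ℝ) < x := hx
      have := hv2nonneg x hx
      positivity
    have hF0 : F y₀ = 0 := by
      have h1 := hF y₀ hy₀
      rw [G_eq_interior hp0 hp1 hy₀' (hu_pos y₀ hy₀) hcase.le, h20] at h1
      simp only [hFdef, hqdef]
      linarith
    have hmin : IsLocalMin F y₀ := by
      filter_upwards [hFnonneg] with x hx
      rw [hF0]; exact hx
    have hg0 : g y₀ = 0 := by
      have := hmin.deriv_eq_zero
      rwa [(hFd y₀ hy₀).deriv] at this
    -- third derivative vanishes at y₀
    have hmin2 : IsLocalMin (deriv (deriv v)) y₀ := by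
      filter_upwards [hopen.mem_nhds hy₀] with x hx
      rw [h20]; exact hv2nonneg x hx
    have hv3 : deriv (deriv (deriv v)) y₀ = 0 := hmin2.deriv_eq_zero
    -- derivative of g at y₀ is negative
    have hgd : HasDerivAt g ((q - 1) * y₀ ^ (q - 1 - 1)) y₀ := by
      have h2 : HasDerivAt (deriv v) 0 y₀ := h20 ▸ hdv1 y₀ hy₀
      have h3 : HasDerivAt (deriv (deriv v)) 0 y₀ := hv3 ▸ hdv2 y₀ hy₀
      have hxp : HasDerivAt (fun t : ℝ => t ^ (q - 1)) ((q - 1) * y₀ ^ (q - 1 - 1)) y₀ :=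
        Real.hasDerivAt_rpow_const (Or.inl hy₀'.ne')
      have hterm : HasDerivAt (fun x => x * deriv (deriv v) x)
          (1 * deriv (deriv v) y₀ + y₀ * 0) y₀ := (hasDerivAt_id y₀).mul h3
      have := ((h2.const_mul β).add ((h2.add hterm).const_mul (r - β))).sub
        ((hxp.const_mul q).const_mul ((1 - p) / p))
      refine this.congr_deriv ?_
      have hCq : (1 - p) / p * q = -1 := by
        have hpne : p ≠ 0 := hp0.ne'
        have hp1ne : p - 1 ≠ 0 := by linarith
        rw [hqdef]
        field_simp
        ring
      rw [h20]
      have : (1 - p) / p * (q * ((q - 1) * y₀ ^ (q - 1 - 1)))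
          = ((1 - p) / p * q) * ((q - 1) * y₀ ^ (q - 1 - 1)) := by ring
      rw [this, hCq]
      ring
    have hgg_neg : (q - 1) * y₀ ^ (q - 1 - 1) < 0 :=
      mul_neg_of_neg_of_pos (by linarith) (Real.rpow_pos_of_pos hy₀' _)
    -- slope argument: g is positive just to the left of y₀
    have hslope := hasDerivAt_iff_tendsto_slope.1 hgd
    have hsl : Filter.Tendsto (slope g y₀) (nhdsWithin y₀ (Iio y₀))
        (nhds ((q - 1) * y₀ ^ (q - 1 - 1))) :=
      hslope.mono_left (nhdsWithin_mono _ fun x hx => ne_of_lt hx)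
    have hneg : ∀ᶠ x in nhdsWithin y₀ (Iio y₀), slope g y₀ x < 0 :=
      hsl.eventually_lt_const hgg_neg
    have hgpos : ∀ᶠ x in nhdsWithin y₀ (Iio y₀), 0 < g x := by
      filter_upwards [hneg, self_mem_nhdsWithin] with x hs hx
      rw [slope_def_field, hg0, sub_zero] at hs
      rcases div_neg_iff.1 hs with ⟨h5, h6⟩ | ⟨h5, h6⟩
      · exact h5
      · have : x < y₀ := hx
        linarith
    have hall : ∀ᶠ x in nhdsWithin y₀ (Iio y₀),
        0 < g x ∧ 0 ≤ F x ∧ 0 < x := by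
      filter_upwards [hgpos, hFnonneg.filter_mono nhdsWithin_le_nhds,
        (eventually_gt_nhds hy₀').filter_mono nhdsWithin_le_nhds] with x h1 h2 h3
      exact ⟨h1, h2, h3⟩
    rw [Filter.eventually_iff, mem_nhdsLT_iff_exists_Ioo_subset] at hall
    obtain ⟨a, ha, hsub⟩ := hall
    have ha' : a < y₀ := ha
    set b := (a + y₀) / 2 with hbdef
    have hb1 : a < b := by rw [hbdef]; linarith
    have hb2 : b < y₀ := by rw [hbdef]; linarith
    have hbmem := hsub ⟨hb1, hb2⟩
    have hb0 : 0 < b := hbmem.2.2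
    have hmonoF : StrictMonoOn F (Icc b y₀) := by
      apply strictMonoOn_of_deriv_pos (convex_Icc b y₀)
      · intro x hx
        have hx0 : (0:ℝ) < x := lt_of_lt_of_le hb0 hx.1
        exact ((hFd x hx0).differentiableAt.continuousAt).continuousWithinAt
      · intro x hx
        rw [interior_Icc] at hx
        have hx0 : (0:ℝ) < x := lt_trans hb0 hx.1
        rw [(hFd x hx0).deriv]
        exact (hsub ⟨lt_trans hb1 hx.1, hx.2⟩).1
    have hlt : F b < F y₀ :=
      hmonoF ⟨le_refl b, hb2.le⟩ ⟨hb2.le, le_refl y₀⟩ hb2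
    rw [hF0] at hlt
    linarith [hbmem.2.1]
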